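/- On the category C with two objects and two parallel non-identity morphisms 0 → 1, every injective fibration of simplicial presheaves is a flasque fibration: if F_0 → G_0 and F_1 → (F_0 × F_0) ×_{(G_0 × G_0)} G_1 are Kan fibrations, then both maps F_1 → F_0 ×_{G_0} G_1 are Kan fibrations. -/

import Mathlib

open CategoryTheory CategoryTheory.Limits Simplicial SSet Opposite

/-- Presheaves of sets on a small category. -/
abbrev PSh (C : Type) [SmallCategory C] := Cᵒᵖ ⥤ Type

/-- Simplicial presheaves on a small category. -/
abbrev SPre (C : Type) [SmallCategory C] := Cᵒᵖ ⥤ SSet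

namespace Flasque

variable {C : Type} [SmallCategory C]


variable {C : Type} [SmallCategory C]

/-- The source of the union coequalizer diagram: the coproduct of the pairwise
fiber products (computed in presheaves). -/
noncomputable def pairObj {ι : Type} {A : ι → PSh C} {X : PSh C} (g : ∀ i, A i ⟶ X)
    (p : ι × ι) : PSh C :=
  pullback (g p.1) (g p.2)

noncomputable def fstMap {ι : Type} {A : ι → PSh C} {X : PSh C} (g : ∀ i, A i ⟶ X) :
    (∐ pairObj g) ⟶ ∐ A :=
  Sigma.desc fun p => pullback.fst (g p.1) (g p.2) ≫ Sigma.ι A p.1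

noncomputable def sndMap {ι : Type} {A : ι → PSh C} {X : PSh C} (g : ∀ i, A i ⟶ X) :
    (∐ pairObj g) ⟶ ∐ A :=
  Sigma.desc fun p => pullback.snd (g p.1) (g p.2) ≫ Sigma.ι A p.2

/-- The union `∪ U`: the coequalizer of `∐ U_i ×_X U_j ⇉ ∐ U_i`. -/
noncomputable def unionPre {ι : Type} {A : ι → PSh C} {X : PSh C} (g : ∀ i, A i ⟶ X) : PSh C :=
  coequalizer (fstMap g) (sndMap g)

/-- The canonical map `∪ U ⟶ X`. -/
noncomputable def unionι {ι : Type} {A : ι → PSh C} {X : PSh C} (g : ∀ i, A i ⟶ X) :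
    unionPre g ⟶ X :=
  coequalizer.desc (Sigma.desc g) (by
    apply Sigma.hom_ext
    intro p
    simp [fstMap, sndMap]
    erw [Category.assoc, Category.assoc, Limits.Sigma.ι_desc, Limits.Sigma.ι_desc]
    exact pullback.condition)



/-- The discrete simplicial set functor. -/
abbrev disc : Type ⥤ SSet := Functor.const SimplexCategoryᵒᵖ

/-- View a presheaf of sets as a discrete simplicial presheaf. -/
abbrev toSPre : PSh C ⥤ SPre C := (Functor.whiskeringRight Cᵒᵖ Type SSet).obj disc

/-- The simplicial presheaf represented by an object of `C`. -/
noncomputable abbrev sRep (X : C) : SPre C := toSPre.obj (yoneda.obj X)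

/-- A map of simplicial sets is a Kan fibration if it has the right lifting
property with respect to all horn inclusions. -/
def IsKanFib {K L : SSet} (f : K ⟶ L) : Prop :=
  ∀ (n : ℕ) (i : Fin (n + 1)), HasLiftingProperty (SSet.horn n i).ι f

/-- A map of simplicial sets is a weak equivalence if its geometric realization
is a homotopy equivalence of topological spaces. -/
def IsWeakEquiv {K L : SSet} (f : K ⟶ L) : Prop :=
  ∃ e : ContinuousMap.HomotopyEquiv (SSet.toTop.obj K) (SSet.toTop.obj L),
    e.toFun = (SSet.toTop.map f).hom

/-- Objectwise weak equivalence of simplicial presheaves. -/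
def ObjWE {F G : SPre C} (η : F ⟶ G) : Prop := ∀ c, IsWeakEquiv (η.app c)

/-- Objectwise (injective) cofibration of simplicial presheaves. -/
def IsInjCof {F G : SPre C} (η : F ⟶ G) : Prop := ∀ c, Mono (η.app c)

/-- Projective fibration of simplicial presheaves. -/
def IsProjFib {F G : SPre C} (η : F ⟶ G) : Prop := ∀ c, IsKanFib (η.app c)

/-- Tensor of a simplicial presheaf with a simplicial set (objectwise product). -/
noncomputable def tensorObj (A : SPre C) (K : SSet) : SPre C where
  obj c := A.obj c ⨯ K
  map f := prod.map (A.map f) (𝟙 K)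
  map_id c := by simp
  map_comp f g := by simp

/-- Tensor of a map of simplicial presheaves with a map of simplicial sets. -/
noncomputable def tensorHom {A B : SPre C} (f : A ⟶ B) {K L : SSet} (g : K ⟶ L) :
    tensorObj A K ⟶ tensorObj B L where
  app c := prod.map (f.app c) g
  naturality c d u := by
    dsimp [tensorObj]
    rw [prod.map_map, prod.map_map]
    simp

@[simp]
lemma tensorHom_id (A : SPre C) (K : SSet) : tensorHom (𝟙 A) (𝟙 K) = 𝟙 (tensorObj A K) := by
  apply NatTrans.ext; funext c
  simp [tensorHom, tensorObj]

lemma tensorHom_comp {A B D : SPre C} (f : A ⟶ B) (f' : B ⟶ D) {K L M : SSet}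
    (g : K ⟶ L) (g' : L ⟶ M) :
    tensorHom (f ≫ f') (g ≫ g') = tensorHom f g ≫ tensorHom f' g' := by
  apply NatTrans.ext; funext c
  simp [tensorHom, prod.map_map]
  exact (prod.map_map _ _ _ _).symm

/-- The pushout product of a map of simplicial presheaves with a map of
simplicial sets. -/
noncomputable def pushoutProd {A B : SPre C} (f : A ⟶ B) {K L : SSet} (g : K ⟶ L) :
    pushout (tensorHom f (𝟙 K)) (tensorHom (𝟙 A) g) ⟶ tensorObj B L :=
  pushout.desc (tensorHom (𝟙 B) g) (tensorHom f (𝟙 L))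
    (by rw [← tensorHom_comp, ← tensorHom_comp]; simp)

/-- The union map `∪U ⟶ X`, viewed as a map of (discrete) simplicial presheaves. -/
noncomputable def sUnionι {n : ℕ} (U : Fin n → C) (X : C) (g : ∀ i, U i ⟶ X) :
    toSPre.obj (unionPre (fun i => yoneda.map (g i))) ⟶ sRep X :=
  toSPre.map (unionι (fun i => yoneda.map (g i)))

/-- A map of simplicial presheaves is a flasque fibration if it has the right
lifting property with respect to all pushout products
`(∪U → X) □ (Λ^{n,k} → Δ^n)`, for `U` a finite collection of monomorphisms
into an object `X` of `C`. -/
def IsFlasqueFib {F G : SPre C} (η : F ⟶ G) : Prop :=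
  ∀ (n : ℕ) (U : Fin n → C) (X : C) (g : ∀ i, U i ⟶ X), (∀ i, Mono (g i)) →
    ∀ (m : ℕ) (k : Fin (m + 1)),
      HasLiftingProperty (pushoutProd (sUnionι U X g) (SSet.horn m k).ι) η

/-- A map of simplicial presheaves is a flasque cofibration if it has the left
lifting property with respect to all maps that are both flasque fibrations and
objectwise weak equivalences. -/
def IsFlasqueCof {A B : SPre C} (η : A ⟶ B) : Prop :=
  ∀ {F G : SPre C} (p : F ⟶ G), IsFlasqueFib p → ObjWE p → HasLiftingProperty η p

/-- Projective cofibrations: left lifting property with respect to objectwise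
acyclic projective fibrations. -/
def IsProjCof {A B : SPre C} (η : A ⟶ B) : Prop :=
  ∀ {F G : SPre C} (p : F ⟶ G), IsProjFib p → ObjWE p → HasLiftingProperty η p

/-- Injective fibrations: right lifting property with respect to objectwise
acyclic injective cofibrations. -/
def IsInjFib {F G : SPre C} (η : F ⟶ G) : Prop :=
  ∀ {A B : SPre C} (j : A ⟶ B), IsInjCof j → ObjWE j → HasLiftingProperty j η

end Flasque

universe u

namespace Flasque

open WalkingParallelPair WalkingParallelPairHom

/-- For a map `η : F ⟶ G` of simplicial presheaves on the walking parallel pair and a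
structure morphism `w : zero ⟶ one`, the induced map `F₁ → F₀ ×_{G₀} G₁`. -/
noncomputable def wppCmp {F G : SPre.{u} WalkingParallelPair} (η : F ⟶ G)
    (w : WalkingParallelPair.zero ⟶ WalkingParallelPair.one) :
    F.obj (op WalkingParallelPair.one) ⟶
      pullback (η.app (op WalkingParallelPair.zero)) (G.map w.op) :=
  pullback.lift (F.map w.op) (η.app (op WalkingParallelPair.one)) (η.naturality w.op)

/-- The induced map `F₁ → (F₀ × F₀) ×_{G₀ × G₀} G₁`. -/
noncomputable def wppInjCmp {F G : SPre.{u} WalkingParallelPair} (η : F ⟶ G) :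
    F.obj (op WalkingParallelPair.one) ⟶
      pullback
        (prod.map (η.app (op WalkingParallelPair.zero)) (η.app (op WalkingParallelPair.zero)))
        (prod.lift (G.map (left : _ ⟶ _).op) (G.map (right : _ ⟶ _).op)) :=
  pullback.lift
    (prod.lift (F.map (left : _ ⟶ _).op) (F.map (right : _ ⟶ _).op))
    (η.app (op WalkingParallelPair.one))
    (by
      apply Limits.prod.hom_ext <;> simp [η.naturality])

end Flasque

namespace Flasque

section Aux

variable {𝒞 : Type*} [Category 𝒞]

/-- Lifting properties are stable under pullback. -/
lemma hlp_of_isPullback {P X Y Z A B : 𝒞} {fst : P ⟶ X} {snd : P ⟶ Y}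
    {f : X ⟶ Z} {g : Y ⟶ Z} (h : IsPullback fst snd f g) (i : A ⟶ B)
    [HasLiftingProperty i g] : HasLiftingProperty i fst := by
  constructor
  intro u v sq
  have sq2 : CommSq (u ≫ snd) i g (v ≫ f) := ⟨by
    rw [Category.assoc, ← h.w, ← Category.assoc, sq.w, Category.assoc]⟩
  refine CommSq.HasLift.mk' ⟨h.lift v sq2.lift sq2.fac_right.symm, ?_, ?_⟩
  · apply h.hom_ext
    · rw [Category.assoc, h.lift_fst, ← sq.w]
    · rw [Category.assoc, h.lift_snd, sq2.fac_left]
  · exact h.lift_fst _ _ _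

variable [HasPullbacks 𝒞] [HasBinaryProducts 𝒞]
variable {X Z W : 𝒞} (a : X ⟶ Z) (d d' : W ⟶ Z)

/-- The comparison map `(X × X) ×_{Z × Z} W ⟶ X ×_Z W` (first coordinate). -/
noncomputable def qFst :
    pullback (prod.map a a) (prod.lift d d') ⟶ pullback a d :=
  pullback.lift (pullback.fst _ _ ≫ prod.fst) (pullback.snd _ _) (by
    rw [Category.assoc, ← prod.map_fst a a, ← Category.assoc, pullback.condition,
      Category.assoc, prod.lift_fst])

/-- The comparison map `(X × X) ×_{Z × Z} W ⟶ X ×_Z W` (second coordinate). -/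
noncomputable def qSnd :
    pullback (prod.map a a) (prod.lift d d') ⟶ pullback a d' :=
  pullback.lift (pullback.fst _ _ ≫ prod.snd) (pullback.snd _ _) (by
    rw [Category.assoc, ← prod.map_snd a a, ← Category.assoc, pullback.condition,
      Category.assoc, prod.lift_snd])

lemma isPullback_qFst :
    IsPullback (qFst a d d') (pullback.fst _ _ ≫ prod.snd)
      (pullback.snd _ _ ≫ d') a := by
  have w : qFst a d d' ≫ (pullback.snd _ _ ≫ d') =
      (pullback.fst (prod.map a a) (prod.lift d d') ≫ prod.snd) ≫ a := by
    rw [← Category.assoc, qFst, pullback.lift_snd, Category.assoc, ← prod.map_snd a a,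
      pullback.condition_assoc, prod.lift_snd]
  apply IsPullback.of_isLimit' ⟨w⟩
  refine PullbackCone.IsLimit.mk _ (fun s => pullback.lift
      (prod.lift (s.fst ≫ pullback.fst _ _) s.snd) (s.fst ≫ pullback.snd _ _) ?_) ?_ ?_ ?_
  · apply Limits.prod.hom_ext
    · rw [Category.assoc, prod.map_fst, ← Category.assoc, prod.lift_fst,
        Category.assoc, pullback.condition, Category.assoc, Category.assoc, prod.lift_fst]
    · rw [Category.assoc, prod.map_snd, ← Category.assoc, prod.lift_snd,
        Category.assoc, prod.lift_snd, ← s.condition, Category.assoc]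
  · intro s
    apply pullback.hom_ext
    · rw [Category.assoc, qFst, pullback.lift_fst, ← Category.assoc, pullback.lift_fst,
        prod.lift_fst]
    · rw [Category.assoc, qFst, pullback.lift_snd, pullback.lift_snd]
  · intro s
    rw [← Category.assoc, pullback.lift_fst, prod.lift_snd]
  · intro s m h1 h2
    apply pullback.hom_ext
    · rw [pullback.lift_fst]
      apply Limits.prod.hom_ext
      · rw [prod.lift_fst, Category.assoc]
        have : pullback.fst (prod.map a a) (prod.lift d d') ≫ prod.fst =
            qFst a d d' ≫ pullback.fst _ _ := by rw [qFst, pullback.lift_fst]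
        rw [this, ← Category.assoc, h1]
      · rw [prod.lift_snd, Category.assoc]; exact h2
    · rw [pullback.lift_snd]
      have : pullback.snd (prod.map a a) (prod.lift d d') =
          qFst a d d' ≫ pullback.snd _ _ := by rw [qFst, pullback.lift_snd]
      rw [this, ← Category.assoc, h1]

lemma isPullback_qSnd :
    IsPullback (qSnd a d d') (pullback.fst _ _ ≫ prod.fst)
      (pullback.snd _ _ ≫ d) a := by
  have w : qSnd a d d' ≫ (pullback.snd _ _ ≫ d) =
      (pullback.fst (prod.map a a) (prod.lift d d') ≫ prod.fst) ≫ a := by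
    rw [← Category.assoc, qSnd, pullback.lift_snd, Category.assoc, ← prod.map_fst a a,
      pullback.condition_assoc, prod.lift_fst]
  apply IsPullback.of_isLimit' ⟨w⟩
  refine PullbackCone.IsLimit.mk _ (fun s => pullback.lift
      (prod.lift s.snd (s.fst ≫ pullback.fst _ _)) (s.fst ≫ pullback.snd _ _) ?_) ?_ ?_ ?_
  · apply Limits.prod.hom_ext
    · rw [Category.assoc, prod.map_fst, ← Category.assoc, prod.lift_fst,
        Category.assoc, prod.lift_fst, ← s.condition, Category.assoc]
    · rw [Category.assoc, prod.map_snd, ← Category.assoc, prod.lift_snd,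
        Category.assoc, pullback.condition, Category.assoc, Category.assoc, prod.lift_snd]
  · intro s
    apply pullback.hom_ext
    · rw [Category.assoc, qSnd, pullback.lift_fst, ← Category.assoc, pullback.lift_fst,
        prod.lift_snd]
    · rw [Category.assoc, qSnd, pullback.lift_snd, pullback.lift_snd]
  · intro s
    rw [← Category.assoc, pullback.lift_fst, prod.lift_fst]
  · intro s m h1 h2
    apply pullback.hom_ext
    · rw [pullback.lift_fst]
      apply Limits.prod.hom_ext
      · rw [prod.lift_fst, Category.assoc]; exact h2
      · rw [prod.lift_snd, Category.assoc]
        have : pullback.fst (prod.map a a) (prod.lift d d') ≫ prod.snd =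
            qSnd a d d' ≫ pullback.fst _ _ := by rw [qSnd, pullback.lift_fst]
        rw [this, ← Category.assoc, h1]
    · rw [pullback.lift_snd]
      have : pullback.snd (prod.map a a) (prod.lift d d') =
          qSnd a d d' ≫ pullback.snd _ _ := by rw [qSnd, pullback.lift_snd]
      rw [this, ← Category.assoc, h1]

end Aux

open WalkingParallelPair WalkingParallelPairHom in
lemma wppCmp_left_eq {F G : SPre.{u} WalkingParallelPair} (η : F ⟶ G) :
    wppCmp η left = wppInjCmp η ≫
      qFst (η.app (op zero)) (G.map (left : _ ⟶ _).op) (G.map (right : _ ⟶ _).op) := by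
  apply pullback.hom_ext
  · rw [Category.assoc, qFst, pullback.lift_fst, wppCmp, pullback.lift_fst,
      ← Category.assoc, wppInjCmp, pullback.lift_fst, prod.lift_fst]
  · rw [Category.assoc, qFst, pullback.lift_snd, wppCmp, pullback.lift_snd,
      wppInjCmp, pullback.lift_snd]

open WalkingParallelPair WalkingParallelPairHom in
lemma wppCmp_right_eq {F G : SPre.{u} WalkingParallelPair} (η : F ⟶ G) :
    wppCmp η right = wppInjCmp η ≫
      qSnd (η.app (op zero)) (G.map (left : _ ⟶ _).op) (G.map (right : _ ⟶ _).op) := by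
  apply pullback.hom_ext
  · rw [Category.assoc, qSnd, pullback.lift_fst, wppCmp, pullback.lift_fst,
      ← Category.assoc, wppInjCmp, pullback.lift_fst, prod.lift_snd]
  · rw [Category.assoc, qSnd, pullback.lift_snd, wppCmp, pullback.lift_snd,
      wppInjCmp, pullback.lift_snd]

end Flasque

open Flasque WalkingParallelPair WalkingParallelPairHom in
/-- On the walking parallel pair category, every injective fibration of
simplicial presheaves is a flasque fibration: if `F₀ → G₀` and
`F₁ → (F₀ × F₀) ×_{G₀ × G₀} G₁` are Kan fibrations, then both maps
`F₁ → F₀ ×_{G₀} G₁` are Kan fibrations. -/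
theorem wpp_injFib_implies_flasque_conditions {F G : SPre WalkingParallelPair}
    (η : F ⟶ G) (h0 : IsKanFib (η.app (op zero))) (h1 : IsKanFib (wppInjCmp η)) :
    IsKanFib (wppCmp η left) ∧ IsKanFib (wppCmp η right) := by
  constructor <;> intro n i
  · rw [wppCmp_left_eq]
    have := h1 n i
    have := h0 n i
    have := hlp_of_isPullback
      (isPullback_qFst (η.app (op zero)) (G.map (left : _ ⟶ _).op)
        (G.map (right : _ ⟶ _).op)) (SSet.horn n i).ι
    infer_instance
  · rw [wppCmp_right_eq]
    have := h1 n i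
    have := h0 n i
    have := hlp_of_isPullback
      (isPullback_qSnd (η.app (op zero)) (G.map (left : _ ⟶ _).op)
        (G.map (right : _ ⟶ _).op)) (SSet.horn n i).ι
    infer_instance
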